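/- arXiv:1510.04638 — 2 statements merged into one kernel-verified Lean document; each statement's English description precedes it below -/
import Mathlib

section
/- Let w: R^d → R_+ be a radial non-negative function supported on the annulus {1/4 < |u| ≤ 1/2}, and for U > 1 set w_U(u) = U^{-d} w(u/U). For any positive semi-definite matrix A ∈ R^{d×d}, the weighted norm ||A||_w² := ∫_{R^d} ⟨Θ(u), A⟩² w_U(u) du, where Θ(u) = uu^T/|u|², satisfies κ₁ ||A||_2² ≤ ||A||_w² ≤ 2||w||_{L¹} ||A||_2², where κ₁ = ∫ (v_1⁴/|v|⁴) w(v) dv and ||A||_2 is the Frobenius norm. In particular, the constants do not depend on U. -/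
open Matrix MeasureTheory BigOperators

variable {d : ℕ}

noncomputable def QF (A : Matrix (Fin d) (Fin d) ℝ) (v : EuclideanSpace ℝ (Fin d)) : ℝ :=
  ∑ i, ∑ j, v i * v j * A i j

lemma measurable_coord (i : Fin d) : Measurable fun v : EuclideanSpace ℝ (Fin d) => v i :=
  ((continuous_apply i).comp (PiLp.continuous_ofLp 2 fun _ : Fin d => ℝ)).measurable

lemma norm_sq_eq (v : EuclideanSpace ℝ (Fin d)) : ‖v‖ ^ 2 = ∑ i, v i ^ 2 := by
  rw [EuclideanSpace.norm_eq]
  rw [Real.sq_sqrt (Finset.sum_nonneg fun i _ => sq_nonneg _)]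
  exact Finset.sum_congr rfl fun i _ => by rw [Real.norm_eq_abs, sq_abs]

lemma measurable_QF (A : Matrix (Fin d) (Fin d) ℝ) : Measurable (QF A) :=
  Finset.measurable_sum _ fun i _ => Finset.measurable_sum _ fun j _ =>
    ((measurable_coord i).mul (measurable_coord j)).mul_const _

noncomputable def gg (A : Matrix (Fin d) (Fin d) ℝ) (v : EuclideanSpace ℝ (Fin d)) : ℝ :=
  (QF A v) ^ 2 / ‖v‖ ^ 4

lemma measurable_gg (A : Matrix (Fin d) (Fin d) ℝ) : Measurable (gg A) :=
  ((measurable_QF A).pow_const 2).div (continuous_norm.measurable.pow_const 4)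

lemma gg_nonneg (A : Matrix (Fin d) (Fin d) ℝ) (v : EuclideanSpace ℝ (Fin d)) : 0 ≤ gg A v :=
  div_nonneg (sq_nonneg _) (by positivity)

lemma trace_eq (A : Matrix (Fin d) (Fin d) ℝ) (u : EuclideanSpace ℝ (Fin d)) :
    Matrix.trace ((Matrix.of fun i j => u i * u j / ‖u‖ ^ 2)ᵀ * A) = QF A u / ‖u‖ ^ 2 := by
  simp only [Matrix.trace, Matrix.diag, Matrix.mul_apply, Matrix.transpose_apply,
    Matrix.of_apply, QF, Finset.sum_div]
  rw [Finset.sum_comm]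
  exact Finset.sum_congr rfl fun i _ => Finset.sum_congr rfl fun j _ => by
    rw [div_mul_eq_mul_div]

lemma QF_smul (A : Matrix (Fin d) (Fin d) ℝ) (c : ℝ) (u : EuclideanSpace ℝ (Fin d)) :
    QF A (c • u) = c ^ 2 * QF A u := by
  unfold QF
  rw [Finset.mul_sum]
  refine Finset.sum_congr rfl fun i _ => ?_
  rw [Finset.mul_sum]
  refine Finset.sum_congr rfl fun j _ => ?_
  simp only [PiLp.smul_apply, smul_eq_mul]
  ring

lemma gg_smul (A : Matrix (Fin d) (Fin d) ℝ) {c : ℝ} (hc : c ≠ 0)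
    (u : EuclideanSpace ℝ (Fin d)) : gg A (c • u) = gg A u := by
  unfold gg
  rw [QF_smul, norm_smul]
  have h1 : (c ^ 2 * QF A u) ^ 2 = c ^ 4 * (QF A u) ^ 2 := by ring
  have h2 : (‖c‖ * ‖u‖) ^ 4 = c ^ 4 * ‖u‖ ^ 4 := by
    rw [mul_pow]
    congr 1
    rw [Real.norm_eq_abs, ← abs_pow]
    exact abs_of_nonneg (by positivity)
  rw [h1, h2, mul_div_mul_left _ _ (pow_ne_zero 4 hc)]

lemma S_nonneg (A : Matrix (Fin d) (Fin d) ℝ) : 0 ≤ ∑ i, ∑ j, (A i j) ^ 2 :=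
  Finset.sum_nonneg fun i _ => Finset.sum_nonneg fun j _ => sq_nonneg _

lemma gg_le (A : Matrix (Fin d) (Fin d) ℝ) (v : EuclideanSpace ℝ (Fin d)) :
    gg A v ≤ ∑ i, ∑ j, (A i j) ^ 2 := by
  rcases eq_or_ne ‖v‖ 0 with h0 | h0
  · unfold gg
    rw [h0]
    simpa using S_nonneg A
  · have hv4 : (0:ℝ) < ‖v‖ ^ 4 := by positivity
    have key : (QF A v) ^ 2 ≤ (∑ i, ∑ j, (A i j) ^ 2) * ‖v‖ ^ 4 := by
      have hcs := Finset.sum_mul_sq_le_sq_mul_sq Finset.univ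
        (fun p : Fin d × Fin d => v p.1 * v p.2) (fun p : Fin d × Fin d => A p.1 p.2)
      have h1 : QF A v = ∑ p : Fin d × Fin d, (v p.1 * v p.2) * A p.1 p.2 := by
        rw [← Finset.univ_product_univ, Finset.sum_product]
        rfl
      have h2 : ∑ p : Fin d × Fin d, (v p.1 * v p.2) ^ 2 = ‖v‖ ^ 4 := by
        rw [← Finset.univ_product_univ, Finset.sum_product]
        have : ∀ i j : Fin d, (v i * v j) ^ 2 = v i ^ 2 * v j ^ 2 := fun i j => by ring
        simp_rw [this, ← Finset.mul_sum, ← Finset.sum_mul]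
        rw [← norm_sq_eq]
        ring
      have h3 : ∑ p : Fin d × Fin d, A p.1 p.2 ^ 2 = ∑ i, ∑ j, (A i j) ^ 2 := by
        rw [← Finset.univ_product_univ, Finset.sum_product]
      rw [h1]
      calc (∑ p : Fin d × Fin d, (v p.1 * v p.2) * A p.1 p.2) ^ 2
          ≤ (∑ p : Fin d × Fin d, (v p.1 * v p.2) ^ 2) * ∑ p : Fin d × Fin d, A p.1 p.2 ^ 2 := hcs
        _ = (∑ i, ∑ j, (A i j) ^ 2) * ‖v‖ ^ 4 := by rw [h2, h3]; ring
    unfold gg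
    rw [div_le_iff₀ hv4]
    exact key

lemma coordq_nonneg (k : Fin d) (v : EuclideanSpace ℝ (Fin d)) :
    0 ≤ (v k) ^ 4 / ‖v‖ ^ 4 := by positivity

lemma coordq_le_one (k : Fin d) (v : EuclideanSpace ℝ (Fin d)) :
    (v k) ^ 4 / ‖v‖ ^ 4 ≤ 1 := by
  rcases eq_or_ne ‖v‖ 0 with h0 | h0
  · rw [h0]; norm_num
  · rw [div_le_one (by positivity)]
    have h1 : (v k) ^ 2 ≤ ‖v‖ ^ 2 := by
      rw [norm_sq_eq]
      exact Finset.single_le_sum (f := fun i => v i ^ 2) (fun i _ => sq_nonneg _)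
        (Finset.mem_univ k)
    calc (v k) ^ 4 = ((v k) ^ 2) ^ 2 := by ring
      _ ≤ (‖v‖ ^ 2) ^ 2 := by
          apply pow_le_pow_left₀ (sq_nonneg _) h1
      _ = ‖v‖ ^ 4 := by ring

lemma quad_eigen {A : Matrix (Fin d) (Fin d) ℝ} (hH : A.IsHermitian)
    (v : EuclideanSpace ℝ (Fin d)) :
    QF A v = ∑ k, hH.eigenvalues k * (hH.eigenvectorBasis.repr v k) ^ 2 := by
  set b := hH.eigenvectorBasis with hb
  have hQ : QF A v = ∑ i, v i * (A *ᵥ ⇑v) i := by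
    unfold QF
    refine Finset.sum_congr rfl fun i _ => ?_
    simp only [Matrix.mulVec, dotProduct, Finset.mul_sum]
    refine Finset.sum_congr rfl fun j _ => ?_
    show v i * v j * A i j = v i * (A i j * v j)
    ring
  have hv : (v : EuclideanSpace ℝ (Fin d)) = ∑ k, b.repr v k • b k := (b.sum_repr v).symm
  have hAv : (A *ᵥ ⇑v) = ∑ k, (b.repr v k * hH.eigenvalues k) • ⇑(b k) := by
    conv_lhs => rw [hv]
    have h0 : (⇑(∑ k, b.repr v k • b k : EuclideanSpace ℝ (Fin d)) : Fin d → ℝ)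
        = ∑ k, b.repr v k • ⇑(b k) := by simp [WithLp.ofLp_sum, WithLp.ofLp_smul]
    rw [h0]
    have h1 : A *ᵥ (∑ k, b.repr v k • ⇑(b k)) = ∑ k, b.repr v k • (A *ᵥ ⇑(b k)) := by
      rw [← Matrix.mulVecLin_apply, map_sum]
      refine Finset.sum_congr rfl fun k _ => ?_
      rw [LinearMap.map_smul, Matrix.mulVecLin_apply]
    rw [h1]
    refine Finset.sum_congr rfl fun k _ => ?_
    rw [hH.mulVec_eigenvectorBasis, smul_smul]
  have hrepr : ∀ k, b.repr v k = ∑ i, b k i * v i := by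
    intro k
    rw [b.repr_apply_apply]
    simp [PiLp.inner_apply, RCLike.inner_apply, conj_trivial]
    exact Finset.sum_congr rfl fun i _ => mul_comm _ _
  rw [hQ, hAv]
  have hpt : ∀ i, v i * (∑ k, (b.repr v k * hH.eigenvalues k) • ⇑(b k)) i
      = ∑ k, (b.repr v k * hH.eigenvalues k) * (v i * b k i) := by
    intro i
    rw [Finset.sum_apply, Finset.mul_sum]
    refine Finset.sum_congr rfl fun k _ => ?_
    show v i * ((b.repr v k * hH.eigenvalues k) • ⇑(b k)) i = _
    rw [Pi.smul_apply, smul_eq_mul]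
    show v i * (b.repr v k * hH.eigenvalues k * b k i) = _
    ring
  simp_rw [hpt]
  rw [Finset.sum_comm]
  refine Finset.sum_congr rfl fun k _ => ?_
  rw [← Finset.mul_sum]
  have : ∑ i, v i * b k i = b.repr v k := by
    rw [hrepr k]
    exact Finset.sum_congr rfl fun i _ => mul_comm _ _
  rw [this]
  ring

lemma sum_eig_sq {A : Matrix (Fin d) (Fin d) ℝ} (hH : A.IsHermitian) :
    ∑ k, hH.eigenvalues k ^ 2 = ∑ i, ∑ j, (A i j) ^ 2 := by
  classical
  set V : Matrix (Fin d) (Fin d) ℝ := (hH.eigenvectorUnitary : Matrix (Fin d) (Fin d) ℝ) with hV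
  set Dm : Matrix (Fin d) (Fin d) ℝ := Matrix.diagonal (RCLike.ofReal ∘ hH.eigenvalues) with hDm
  have hVV : star V * V = 1 := (Matrix.mem_unitaryGroup_iff'.mp hH.eigenvectorUnitary.2)
  have hVV' : V * star V = 1 := (Matrix.mem_unitaryGroup_iff.mp hH.eigenvectorUnitary.2)
  have hsym : ∀ i j, A j i = A i j := by
    intro i j
    conv_lhs => rw [← hH.eq]
    simp [Matrix.conjTranspose_apply]
  have h1 : ∑ i, ∑ j, (A i j) ^ 2 = Matrix.trace (A * A) := by
    simp only [Matrix.trace, Matrix.diag, Matrix.mul_apply]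
    refine Finset.sum_congr rfl fun i _ => Finset.sum_congr rfl fun j _ => ?_
    rw [hsym i j]
    ring
  have hspec' : A = V * Dm * star V := by
    rw [hV, hDm]
    exact hH.spectral_theorem
  have h2 : A * A = V * (Dm * Dm) * star V := by
    conv_lhs => rw [hspec']
    simp only [Matrix.mul_assoc]
    rw [show star V * (V * (Dm * star V)) = Dm * star V from by
      rw [← Matrix.mul_assoc, hVV, Matrix.one_mul]]
  have h3 : Matrix.trace (A * A) = Matrix.trace (Dm * Dm) := by
    rw [h2, Matrix.trace_mul_cycle, ← Matrix.mul_assoc, hVV, Matrix.one_mul]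
  have h4 : Matrix.trace (Dm * Dm) = ∑ k, hH.eigenvalues k ^ 2 := by
    rw [hDm, Matrix.diagonal_mul_diagonal, Matrix.trace_diagonal]
    refine Finset.sum_congr rfl fun k _ => ?_
    simp [RCLike.ofReal_real_eq_id]
    ring
  rw [h1, h3, h4]

open scoped ENNReal

lemma integral_isometry (f : EuclideanSpace ℝ (Fin d) → ℝ)
    (e : EuclideanSpace ℝ (Fin d) ≃ₗᵢ[ℝ] EuclideanSpace ℝ (Fin d)) :
    ∫ v, f (e v) = ∫ v, f v :=
  e.measurePreserving.integral_comp e.toHomeomorph.measurableEmbedding f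

lemma lintegral_isometry (f : EuclideanSpace ℝ (Fin d) → ℝ≥0∞) (hf : Measurable f)
    (e : EuclideanSpace ℝ (Fin d) ≃ₗᵢ[ℝ] EuclideanSpace ℝ (Fin d)) :
    ∫⁻ v, f (e v) = ∫⁻ v, f v :=
  e.measurePreserving.lintegral_comp hf

noncomputable def swapIso (i j : Fin d) :
    EuclideanSpace ℝ (Fin d) ≃ₗᵢ[ℝ] EuclideanSpace ℝ (Fin d) :=
  LinearIsometryEquiv.piLpCongrLeft 2 ℝ ℝ (Equiv.swap i j)

lemma swapIso_apply (i j k : Fin d) (v : EuclideanSpace ℝ (Fin d)) :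
    swapIso i j v k = v (Equiv.swap i j k) := by
  simp [swapIso, LinearIsometryEquiv.piLpCongrLeft_apply, Equiv.piCongrLeft'_apply]

section W

variable {w : EuclideanSpace ℝ (Fin d) → ℝ}

lemma kappa_swap (hd : 0 < d) (hw_radial : ∀ u v : EuclideanSpace ℝ (Fin d), ‖u‖ = ‖v‖ → w u = w v)
    (i : Fin d) :
    ∫ v, (v i) ^ 4 / ‖v‖ ^ 4 * w v = ∫ v, (v ⟨0, hd⟩) ^ 4 / ‖v‖ ^ 4 * w v := by
  set i0 : Fin d := ⟨0, hd⟩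
  rw [← integral_isometry (fun v => (v i0) ^ 4 / ‖v‖ ^ 4 * w v) (swapIso i i0)]
  congr 1
  funext v
  simp only [swapIso_apply, LinearIsometryEquiv.norm_map]
  rw [Equiv.swap_apply_right, hw_radial (swapIso i i0 v) v (LinearIsometryEquiv.norm_map _ v)]

lemma lintegral_kappa_swap (hd : 0 < d) (hw_meas : Measurable w)
    (hw_radial : ∀ u v : EuclideanSpace ℝ (Fin d), ‖u‖ = ‖v‖ → w u = w v) (i : Fin d) :
    ∫⁻ v, ENNReal.ofReal ((v i) ^ 4 / ‖v‖ ^ 4 * w v)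
      = ∫⁻ v, ENNReal.ofReal ((v ⟨0, hd⟩) ^ 4 / ‖v‖ ^ 4 * w v) := by
  set i0 : Fin d := ⟨0, hd⟩
  have hmeas : Measurable fun v : EuclideanSpace ℝ (Fin d) =>
      ENNReal.ofReal ((v i0) ^ 4 / ‖v‖ ^ 4 * w v) :=
    ((((measurable_coord i0).pow_const 4).div
      (continuous_norm.measurable.pow_const 4)).mul hw_meas).ennreal_ofReal
  rw [← lintegral_isometry _ hmeas (swapIso i i0)]
  refine lintegral_congr fun v => ?_
  simp only [swapIso_apply, LinearIsometryEquiv.norm_map]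
  rw [Equiv.swap_apply_right, hw_radial (swapIso i i0 v) v (LinearIsometryEquiv.norm_map _ v)]

lemma lintegral_w_top (hw_meas : Measurable w) (hw_nonneg : ∀ u, 0 ≤ w u)
    (hw_int : ¬ Integrable w) : ∫⁻ v, ENNReal.ofReal (w v) = ∞ := by
  have h1 : ¬ HasFiniteIntegral w volume := fun h => hw_int ⟨hw_meas.aestronglyMeasurable, h⟩
  rw [hasFiniteIntegral_iff_ofReal (Filter.Eventually.of_forall hw_nonneg)] at h1
  exact not_lt.mp h1 |>.antisymm le_top |>.symm

lemma pointwise_coord_sum (hd : 0 < d) (hw_nonneg : ∀ u, 0 ≤ w u) (hw0 : w 0 = 0)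
    (v : EuclideanSpace ℝ (Fin d)) :
    (1 / (d:ℝ)) * w v ≤ ∑ i, (v i) ^ 4 / ‖v‖ ^ 4 * w v := by
  rcases eq_or_ne v 0 with rfl | hv
  · simp [hw0]
  · have hd0 : (0:ℝ) < d := by exact_mod_cast hd
    have hnv : (0:ℝ) < ‖v‖ := norm_pos_iff.mpr hv
    have key : ‖v‖ ^ 4 ≤ (d:ℝ) * ∑ i, (v i) ^ 4 := by
      have h := sq_sum_le_card_mul_sum_sq (s := Finset.univ)
        (f := fun i : Fin d => v i ^ 2)
      simp only [Finset.card_univ, Fintype.card_fin] at h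
      have e1 : (∑ i, v i ^ 2) ^ 2 = ‖v‖ ^ 4 := by
        rw [← norm_sq_eq]; ring
      have e2 : ∑ i : Fin d, (v i ^ 2) ^ 2 = ∑ i, (v i) ^ 4 :=
        Finset.sum_congr rfl fun i _ => by ring
      rw [e1, e2] at h
      exact_mod_cast h
    have hsum : ∑ i, (v i) ^ 4 / ‖v‖ ^ 4 * w v = (∑ i, (v i) ^ 4) / ‖v‖ ^ 4 * w v := by
      rw [Finset.sum_div, Finset.sum_mul]
    rw [hsum]
    apply mul_le_mul_of_nonneg_right _ (hw_nonneg v)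
    rw [le_div_iff₀ (by positivity), div_mul_eq_mul_div, one_mul, div_le_iff₀ hd0]
    linarith [key]

end W

section W2

variable {w : EuclideanSpace ℝ (Fin d) → ℝ}

lemma meas_coordq (hw_meas : Measurable w) (i : Fin d) :
    Measurable fun v : EuclideanSpace ℝ (Fin d) =>
      ENNReal.ofReal ((v i) ^ 4 / ‖v‖ ^ 4 * w v) :=
  ((((measurable_coord i).pow_const 4).div
    (continuous_norm.measurable.pow_const 4)).mul hw_meas).ennreal_ofReal

lemma lintegral_coordq_top (hd : 0 < d) (hw_meas : Measurable w) (hw_nonneg : ∀ u, 0 ≤ w u)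
    (hw_radial : ∀ u v : EuclideanSpace ℝ (Fin d), ‖u‖ = ‖v‖ → w u = w v)
    (hw0 : w 0 = 0) (hw_int : ¬ Integrable w) :
    ∫⁻ v, ENNReal.ofReal ((v ⟨0, hd⟩) ^ 4 / ‖v‖ ^ 4 * w v) = ∞ := by
  have hd0 : (0:ℝ) < (d:ℝ) := by exact_mod_cast hd
  set i0 : Fin d := ⟨0, hd⟩ with hi0
  set J := ∫⁻ v, ENNReal.ofReal ((v i0) ^ 4 / ‖v‖ ^ 4 * w v) with hJ
  by_contra hJtop
  have hsum : ∑ i : Fin d, (∫⁻ v, ENNReal.ofReal ((v i) ^ 4 / ‖v‖ ^ 4 * w v))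
      = (d : ℝ≥0∞) * J := by
    have : ∀ i : Fin d, (∫⁻ v, ENNReal.ofReal ((v i) ^ 4 / ‖v‖ ^ 4 * w v)) = J :=
      fun i => lintegral_kappa_swap hd hw_meas hw_radial i
    simp_rw [this]
    rw [Finset.sum_const, Finset.card_univ, Fintype.card_fin, nsmul_eq_mul]
  have h2 : ∫⁻ v, ENNReal.ofReal ((1 / (d:ℝ)) * w v) ≤ (d : ℝ≥0∞) * J := by
    rw [← hsum, ← lintegral_finset_sum _ (fun i _ => meas_coordq hw_meas i)]
    refine lintegral_mono fun v => ?_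
    calc ENNReal.ofReal ((1 / (d:ℝ)) * w v)
        ≤ ENNReal.ofReal (∑ i, (v i) ^ 4 / ‖v‖ ^ 4 * w v) :=
          ENNReal.ofReal_le_ofReal (pointwise_coord_sum hd hw_nonneg hw0 v)
      _ = ∑ i, ENNReal.ofReal ((v i) ^ 4 / ‖v‖ ^ 4 * w v) :=
          ENNReal.ofReal_sum_of_nonneg fun i _ =>
            mul_nonneg (coordq_nonneg i v) (hw_nonneg v)
  have h3 : ∫⁻ v, ENNReal.ofReal ((1 / (d:ℝ)) * w v) = ∞ := by
    have h1d : (0:ℝ) ≤ 1 / (d:ℝ) := by positivity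
    simp_rw [ENNReal.ofReal_mul h1d]
    rw [lintegral_const_mul _ hw_meas.ennreal_ofReal,
      lintegral_w_top hw_meas hw_nonneg hw_int,
      ENNReal.mul_top (ne_of_gt (ENNReal.ofReal_pos.mpr (by positivity)))]
  rw [h3] at h2
  exact ENNReal.mul_ne_top (ENNReal.natCast_ne_top d) hJtop (top_le_iff.mp h2)

end W2

lemma div_le_div_nn {a b c : ℝ} (h : a ≤ b) (hc : 0 ≤ c) : a / c ≤ b / c := by
  rcases eq_or_lt_of_le hc with h0 | h0
  · rw [← h0]; simp
  · exact (div_le_div_iff_of_pos_right h0).mpr h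


/-- The norm equivalence for the weighted norm `‖A‖_w² = ∫ ⟨Θ(u),A⟩² w_U(u) du`,
`Θ(u) = uuᵀ/|u|²`, with constants independent of `U`:
`κ₁ ‖A‖₂² ≤ ‖A‖_w² ≤ 2 ‖w‖_{L¹} ‖A‖₂²` for positive semi-definite `A`. -/
theorem weighted_norm_isometry {d : ℕ} (hd : 0 < d)
    (w : EuclideanSpace ℝ (Fin d) → ℝ)
    (hw_meas : Measurable w)
    (hw_nonneg : ∀ u, 0 ≤ w u)
    (hw_radial : ∀ u v : EuclideanSpace ℝ (Fin d), ‖u‖ = ‖v‖ → w u = w v)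
    (hw_supp : ∀ u, w u ≠ 0 → 1 / 4 < ‖u‖ ∧ ‖u‖ ≤ 1 / 2)
    (U : ℝ) (hU : 1 < U)
    (A : Matrix (Fin d) (Fin d) ℝ) (hA : A.PosSemidef) :
    (∫ v, (v ⟨0, hd⟩) ^ 4 / ‖v‖ ^ 4 * w v) * (∑ i, ∑ j, (A i j) ^ 2) ≤
        (∫ u, (Matrix.trace ((Matrix.of fun i j => u i * u j / ‖u‖ ^ 2)ᵀ * A)) ^ 2 *
          (U ^ (-(d : ℝ)) * w ((U⁻¹ : ℝ) • u))) ∧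
      (∫ u, (Matrix.trace ((Matrix.of fun i j => u i * u j / ‖u‖ ^ 2)ᵀ * A)) ^ 2 *
          (U ^ (-(d : ℝ)) * w ((U⁻¹ : ℝ) • u))) ≤
        2 * (∫ v, w v) * (∑ i, ∑ j, (A i j) ^ 2) := by
  classical
  have hU0 : (0:ℝ) < U := lt_trans zero_lt_one hU
  have hUne : (U⁻¹ : ℝ) ≠ 0 := inv_ne_zero (ne_of_gt hU0)
  set S := ∑ i, ∑ j, (A i j) ^ 2 with hSdef
  have hSnn : 0 ≤ S := S_nonneg A
  have hw0 : w 0 = 0 := by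
    by_contra h
    have h2 := (hw_supp 0 h).1
    rw [norm_zero] at h2
    linarith
  -- Step 1: reduce the middle integral by scaling change of variables
  have hmid : (∫ u, (Matrix.trace ((Matrix.of fun i j => u i * u j / ‖u‖ ^ 2)ᵀ * A)) ^ 2 *
      (U ^ (-(d : ℝ)) * w ((U⁻¹ : ℝ) • u))) = ∫ v, gg A v * w v := by
    have hptw : ∀ u : EuclideanSpace ℝ (Fin d),
        (Matrix.trace ((Matrix.of fun i j => u i * u j / ‖u‖ ^ 2)ᵀ * A)) ^ 2 *
          (U ^ (-(d : ℝ)) * w ((U⁻¹ : ℝ) • u))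
        = U ^ (-(d : ℝ)) * ((fun v => gg A v * w v) ((U⁻¹:ℝ) • u)) := by
      intro u
      simp only
      rw [trace_eq, gg_smul A hUne]
      unfold gg
      rw [div_pow, ← pow_mul]
      norm_num
      ring
    calc (∫ u, (Matrix.trace ((Matrix.of fun i j => u i * u j / ‖u‖ ^ 2)ᵀ * A)) ^ 2 *
            (U ^ (-(d : ℝ)) * w ((U⁻¹ : ℝ) • u)))
        = ∫ u, U ^ (-(d : ℝ)) * ((fun v => gg A v * w v) ((U⁻¹:ℝ) • u)) :=
          integral_congr_ae (Filter.Eventually.of_forall hptw)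
      _ = U ^ (-(d : ℝ)) * ∫ u, (fun v => gg A v * w v) ((U⁻¹:ℝ) • u) :=
          integral_const_mul _ _
      _ = U ^ (-(d : ℝ)) * ((|U ^ Module.finrank ℝ (EuclideanSpace ℝ (Fin d))|) •
            (∫ v, gg A v * w v)) := by
          rw [MeasureTheory.Measure.integral_comp_inv_smul volume (fun v => gg A v * w v) U]
      _ = ∫ v, gg A v * w v := by
          rw [finrank_euclideanSpace_fin, smul_eq_mul, abs_of_pos (pow_pos hU0 d),
            Real.rpow_neg (le_of_lt hU0), Real.rpow_natCast, ← mul_assoc,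
            inv_mul_cancel₀ (ne_of_gt (pow_pos hU0 d)), one_mul]
  rw [hmid]
  -- eigen data
  have hH : A.IsHermitian := hA.1
  set lam := hH.eigenvalues with hlam
  set b := hH.eigenvectorBasis with hb
  have hlamnn : ∀ k, 0 ≤ lam k := fun k => hA.eigenvalues_nonneg k
  have hlamS : ∑ k, lam k ^ 2 = S := sum_eig_sq hH
  set R : EuclideanSpace ℝ (Fin d) → ℝ :=
    fun u => (∑ k, lam k * (u k) ^ 2) ^ 2 / ‖u‖ ^ 4 * w u with hRdef
  have hrot : ∀ v, gg A v * w v = R (b.repr v) := by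
    intro v
    rw [hRdef]
    simp only
    rw [← hw_radial (b.repr v) v (LinearIsometryEquiv.norm_map _ v)]
    unfold gg
    rw [quad_eigen hH v, LinearIsometryEquiv.norm_map]
  have hR_eq : ∀ u, R u = gg A (b.repr.symm u) * w u := by
    intro u
    have hwu : w (b.repr.symm u) = w u :=
      hw_radial _ _ (LinearIsometryEquiv.norm_map b.repr.symm u)
    rw [← hwu, hrot (b.repr.symm u), LinearIsometryEquiv.apply_symm_apply]
  have hR_nonneg : ∀ u, 0 ≤ R u := fun u =>
    mul_nonneg (div_nonneg (sq_nonneg _) (by positivity)) (hw_nonneg u)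
  have hR_le : ∀ u, R u ≤ S * w u := by
    intro u
    rw [hR_eq u]
    exact mul_le_mul_of_nonneg_right (gg_le A _) (hw_nonneg u)
  have hR_meas : Measurable R := by
    apply Measurable.mul _ hw_meas
    apply Measurable.div _ (continuous_norm.measurable.pow_const 4)
    exact (Finset.measurable_sum _ fun k _ =>
      ((measurable_coord k).pow_const 2).const_mul _).pow_const 2
  set L : EuclideanSpace ℝ (Fin d) → ℝ :=
    fun u => ∑ k, lam k ^ 2 * ((u k) ^ 4 / ‖u‖ ^ 4 * w u) with hLdef
  have hL_le_R : ∀ u, L u ≤ R u := by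
    intro u
    rw [hLdef, hRdef]
    simp only
    have hnum : ∑ k, lam k ^ 2 * (u k) ^ 4 ≤ (∑ k, lam k * (u k) ^ 2) ^ 2 := by
      have h1 := Finset.sum_sq_le_sq_sum_of_nonneg
        (f := fun k => lam k * (u k) ^ 2) (s := Finset.univ)
        (fun k _ => mul_nonneg (hlamnn k) (sq_nonneg _))
      calc ∑ k, lam k ^ 2 * (u k) ^ 4 = ∑ k, (lam k * (u k) ^ 2) ^ 2 :=
            Finset.sum_congr rfl fun k _ => by ring
        _ ≤ _ := h1
    have hLu : ∑ k, lam k ^ 2 * ((u k) ^ 4 / ‖u‖ ^ 4 * w u)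
        = (∑ k, lam k ^ 2 * (u k) ^ 4) / ‖u‖ ^ 4 * w u := by
      rw [Finset.sum_div, Finset.sum_mul]
      exact Finset.sum_congr rfl fun k _ => by ring
    rw [hLu]
    exact mul_le_mul_of_nonneg_right (div_le_div_nn hnum (by positivity)) (hw_nonneg u)
  have hterm_le_R : ∀ (k : Fin d) (u : EuclideanSpace ℝ (Fin d)),
      lam k ^ 2 * ((u k) ^ 4 / ‖u‖ ^ 4 * w u) ≤ R u := by
    intro k u
    refine le_trans ?_ (hL_le_R u)
    rw [hLdef]
    simp only
    exact Finset.single_le_sum (f := fun k => lam k ^ 2 * ((u k) ^ 4 / ‖u‖ ^ 4 * w u))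
      (fun k _ => mul_nonneg (sq_nonneg _)
        (mul_nonneg (coordq_nonneg k u) (hw_nonneg u))) (Finset.mem_univ k)
  by_cases hw_int : Integrable w volume
  · -- integrable case
    have hint_Sw : Integrable (fun u => S * w u) volume := hw_int.const_mul S
    have hint_R : Integrable R volume := by
      refine Integrable.mono' hint_Sw hR_meas.aestronglyMeasurable ?_
      exact Filter.Eventually.of_forall fun u => by
        rw [Real.norm_of_nonneg (hR_nonneg u)]; exact hR_le u
    have hint_gg : Integrable (fun v => gg A v * w v) volume := by
      refine Integrable.mono' hint_Sw
        (((measurable_gg A).mul hw_meas).aestronglyMeasurable) ?_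
      exact Filter.Eventually.of_forall fun v => by
        rw [Real.norm_of_nonneg (mul_nonneg (gg_nonneg A v) (hw_nonneg v))]
        exact mul_le_mul_of_nonneg_right (gg_le A v) (hw_nonneg v)
    have hint_hk : ∀ k : Fin d, Integrable (fun u : EuclideanSpace ℝ (Fin d) =>
        (u k) ^ 4 / ‖u‖ ^ 4 * w u) volume := by
      intro k
      refine Integrable.mono' hw_int ((((measurable_coord k).pow_const 4).div
        (continuous_norm.measurable.pow_const 4)).mul hw_meas).aestronglyMeasurable ?_
      refine Filter.Eventually.of_forall fun u => ?_
      rw [Real.norm_of_nonneg (mul_nonneg (coordq_nonneg k u) (hw_nonneg u))]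
      calc (u k) ^ 4 / ‖u‖ ^ 4 * w u ≤ 1 * w u :=
            mul_le_mul_of_nonneg_right (coordq_le_one k u) (hw_nonneg u)
        _ = w u := one_mul _
    have hIgg_R : (∫ v, gg A v * w v) = ∫ u, R u := by
      rw [integral_congr_ae (Filter.Eventually.of_forall hrot)]
      exact integral_isometry R b.repr
    have hint_L : Integrable L volume := by
      rw [hLdef]
      exact integrable_finset_sum _ fun k _ => (hint_hk k).const_mul _
    have hIL : (∫ u, L u) = (∫ v, (v ⟨0, hd⟩) ^ 4 / ‖v‖ ^ 4 * w v) * S := by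
      rw [hLdef]
      simp only
      rw [integral_finset_sum _ (fun k _ => (hint_hk k).const_mul _)]
      have hkk : ∀ k : Fin d, (∫ u, lam k ^ 2 * ((u k) ^ 4 / ‖u‖ ^ 4 * w u))
          = lam k ^ 2 * ∫ v, (v ⟨0, hd⟩) ^ 4 / ‖v‖ ^ 4 * w v := by
        intro k
        rw [integral_const_mul, kappa_swap hd hw_radial k]
      simp_rw [hkk]
      rw [← Finset.sum_mul, hlamS, mul_comm]
    constructor
    · calc (∫ v, (v ⟨0, hd⟩) ^ 4 / ‖v‖ ^ 4 * w v) * S = ∫ u, L u := hIL.symm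
        _ ≤ ∫ u, R u := integral_mono hint_L hint_R hL_le_R
        _ = ∫ v, gg A v * w v := hIgg_R.symm
    · calc (∫ v, gg A v * w v) ≤ ∫ u, S * w u := integral_mono hint_gg hint_Sw
            (fun v => mul_le_mul_of_nonneg_right (gg_le A v) (hw_nonneg v))
        _ = S * ∫ v, w v := integral_const_mul _ _
        _ ≤ 2 * (∫ v, w v) * S := by
            have h0 : 0 ≤ ∫ v, w v := integral_nonneg hw_nonneg
            nlinarith [mul_nonneg hSnn h0]
  · -- non-integrable case
    have hwint0 : (∫ v, w v) = 0 := integral_undef hw_int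
    have hJtop : ∫⁻ v, ENNReal.ofReal ((v ⟨0, hd⟩) ^ 4 / ‖v‖ ^ 4 * w v) = ∞ :=
      lintegral_coordq_top hd hw_meas hw_nonneg hw_radial hw0 hw_int
    have hk_nonneg : ∀ v : EuclideanSpace ℝ (Fin d),
        0 ≤ (v ⟨0, hd⟩) ^ 4 / ‖v‖ ^ 4 * w v :=
      fun v => mul_nonneg (coordq_nonneg _ v) (hw_nonneg v)
    have hknotint : ¬ Integrable
        (fun v : EuclideanSpace ℝ (Fin d) => (v ⟨0, hd⟩) ^ 4 / ‖v‖ ^ 4 * w v) volume := by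
      intro h
      have h2 := (hasFiniteIntegral_iff_ofReal
        (Filter.Eventually.of_forall hk_nonneg)).mp h.2
      rw [hJtop] at h2
      exact lt_irrefl _ h2
    have hk0 : (∫ v, (v ⟨0, hd⟩) ^ 4 / ‖v‖ ^ 4 * w v) = 0 := integral_undef hknotint
    constructor
    · rw [hk0, zero_mul]
      exact integral_nonneg fun v => mul_nonneg (gg_nonneg A v) (hw_nonneg v)
    · rw [hwint0, mul_zero, zero_mul]
      by_cases hS0 : S = 0
      · have hAij : ∀ i j, A i j = 0 := by
          intro i j
          have h1 : A i j ^ 2 ≤ ∑ j', A i j' ^ 2 :=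
            Finset.single_le_sum (f := fun j' => A i j' ^ 2)
              (fun _ _ => sq_nonneg _) (Finset.mem_univ j)
          have h2 : ∑ j', A i j' ^ 2 ≤ S := by
            rw [hSdef]
            exact Finset.single_le_sum (f := fun i => ∑ j, A i j ^ 2)
              (fun i _ => Finset.sum_nonneg fun _ _ => sq_nonneg _) (Finset.mem_univ i)
          have h3 : A i j ^ 2 = 0 := le_antisymm (by linarith) (sq_nonneg _)
          exact pow_eq_zero_iff (two_ne_zero) |>.mp h3
        have hgg0 : ∀ v : EuclideanSpace ℝ (Fin d), gg A v * w v = 0 := by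
          intro v
          unfold gg QF
          simp [hAij]
        rw [integral_congr_ae (Filter.Eventually.of_forall hgg0), integral_zero]
      · obtain ⟨k, hk⟩ : ∃ k, lam k ≠ 0 := by
          by_contra hall
          push_neg at hall
          apply hS0
          rw [← hlamS]
          exact Finset.sum_eq_zero fun k _ => by rw [hall k]; ring
        have hlamk : (0:ℝ) < lam k ^ 2 :=
          lt_of_le_of_ne (sq_nonneg _) (Ne.symm (pow_ne_zero 2 hk))
        have hnotint : ¬ Integrable (fun v => gg A v * w v) volume := by
          intro hint
          have hfin := (hasFiniteIntegral_iff_ofReal (Filter.Eventually.of_forall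
            fun v => mul_nonneg (gg_nonneg A v) (hw_nonneg v))).mp hint.2
          have hchain : ∫⁻ v, ENNReal.ofReal (gg A v * w v)
              = ∫⁻ u, ENNReal.ofReal (R u) := by
            rw [← lintegral_isometry (fun u => ENNReal.ofReal (R u))
              hR_meas.ennreal_ofReal b.repr]
            exact lintegral_congr fun v => by rw [hrot v]
          have hge : ENNReal.ofReal (lam k ^ 2) *
              (∫⁻ v, ENNReal.ofReal ((v ⟨0, hd⟩) ^ 4 / ‖v‖ ^ 4 * w v))
              ≤ ∫⁻ u, ENNReal.ofReal (R u) := by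
            rw [← lintegral_kappa_swap hd hw_meas hw_radial k,
              ← lintegral_const_mul _ (meas_coordq hw_meas k)]
            refine lintegral_mono fun u => ?_
            rw [← ENNReal.ofReal_mul (le_of_lt hlamk)]
            exact ENNReal.ofReal_le_ofReal (hterm_le_R k u)
          rw [hJtop, ENNReal.mul_top (ne_of_gt (ENNReal.ofReal_pos.mpr hlamk))] at hge
          rw [hchain] at hfin
          rw [top_le_iff.mp hge] at hfin
          exact lt_irrefl _ hfin
        rw [integral_undef hnotint]
end

section
/- Let M ∈ R^{d×d} have rank r with singular value decomposition M = Σ_{j=1}^r σ_j u_j v_j^T, and let S_1 = span(u_1,...,u_r), S_2 = span(v_1,...,v_r) with orthogonal projections Π_{S_1}, Π_{S_2} and Π_{S_1^⊥}, Π_{S_2^⊥}. Define π_M(A) = A − Π_{S_1^⊥} A Π_{S_2^⊥}. Then for any A ∈ R^{d×d}: (a) π_M(A) = Π_{S_1^⊥} A Π_{S_2} + Π_{S_1} A; (b) rank(π_M(A)) ≤ 2r; (c) ||π_M(A)||_1 ≤ √(2r) ||A||_2. -/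
open Matrix BigOperators

/-- Singular values of a real square matrix: square roots of the eigenvalues of `Aᵀ * A`. -/
noncomputable def singularValues {d : ℕ} (A : Matrix (Fin d) (Fin d) ℝ) : Fin d → ℝ :=
  fun i => Real.sqrt ((Matrix.isHermitian_conjTranspose_mul_self A).eigenvalues i)

/-- Nuclear norm: sum of singular values. -/
noncomputable def nuclearNorm {d : ℕ} (A : Matrix (Fin d) (Fin d) ℝ) : ℝ :=
  ∑ i, singularValues A i

/-- Frobenius norm. -/
noncomputable def frobeniusNorm {d : ℕ} (A : Matrix (Fin d) (Fin d) ℝ) : ℝ :=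
  Real.sqrt (∑ i, ∑ j, (A i j) ^ 2)

lemma my_rank_add_le {d : ℕ} (A B : Matrix (Fin d) (Fin d) ℝ) :
    (A + B).rank ≤ A.rank + B.rank := by
  have h : LinearMap.range (A + B).mulVecLin ≤
      LinearMap.range A.mulVecLin ⊔ LinearMap.range B.mulVecLin := by
    rintro x ⟨y, rfl⟩
    exact Submodule.mem_sup.2 ⟨A.mulVecLin y, ⟨y, rfl⟩, B.mulVecLin y, ⟨y, rfl⟩, by
      simp [Matrix.mulVecLin_add]⟩
  calc (A + B).rank ≤ Module.finrank ℝ ↥(LinearMap.range A.mulVecLin ⊔ LinearMap.range B.mulVecLin) :=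
        Submodule.finrank_mono h
    _ ≤ A.rank + B.rank := Submodule.finrank_add_le_finrank_add_finrank _ _

lemma my_rank_vecMulVec_le {d : ℕ} (w v : Fin d → ℝ) :
    (Matrix.vecMulVec w v).rank ≤ 1 := by
  rw [Matrix.vecMulVec_eq (Fin 1)]
  exact (Matrix.rank_mul_le_left _ _).trans ((Matrix.rank_le_card_width _).trans (by simp))

lemma my_rank_sum_le {d r : ℕ} (u : Fin r → Fin d → ℝ) :
    (∑ j, Matrix.vecMulVec (u j) (u j)).rank ≤ r := by
  classical
  have : ∀ s : Finset (Fin r), (∑ j ∈ s, Matrix.vecMulVec (u j) (u j)).rank ≤ s.card := by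
    intro s
    induction s using Finset.induction with
    | empty => simp
    | @insert a s h ih =>
      rw [Finset.sum_insert h, Finset.card_insert_of_notMem h]
      have := my_rank_vecMulVec_le (u a) (u a)
      calc _ ≤ (Matrix.vecMulVec (u a) (u a)).rank + (∑ x ∈ s, Matrix.vecMulVec (u x) (u x)).rank := my_rank_add_le _ _
        _ ≤ s.card + 1 := by omega
  exact le_trans (this Finset.univ) (by simp)

lemma my_vmv_mul {d : ℕ} (a b c e : Fin d → ℝ) :
    Matrix.vecMulVec a b * Matrix.vecMulVec c e = (∑ k, b k * c k) • Matrix.vecMulVec a e := by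
  ext i j
  simp only [Matrix.mul_apply, Matrix.vecMulVec_apply, Matrix.smul_apply, smul_eq_mul,
    Finset.sum_mul]
  exact Finset.sum_congr rfl fun k _ => by ring

lemma my_proj_idem {d r : ℕ} (u : Fin r → Fin d → ℝ)
    (hu : ∀ i j, ∑ a, u i a * u j a = if i = j then (1 : ℝ) else 0) :
    (∑ j, Matrix.vecMulVec (u j) (u j)) * (∑ j, Matrix.vecMulVec (u j) (u j))
      = ∑ j, Matrix.vecMulVec (u j) (u j) := by
  rw [Finset.sum_mul_sum]
  simp only [my_vmv_mul, hu]
  simp [ite_smul]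

lemma my_proj_symm {d r : ℕ} (u : Fin r → Fin d → ℝ) :
    (∑ j, Matrix.vecMulVec (u j) (u j))ᵀ = ∑ j, Matrix.vecMulVec (u j) (u j) := by
  ext i j
  simp only [Matrix.transpose_apply, Matrix.sum_apply, Matrix.vecMulVec_apply]
  exact Finset.sum_congr rfl fun k _ => mul_comm _ _

lemma my_trace_frob {d : ℕ} (A : Matrix (Fin d) (Fin d) ℝ) :
    (Aᵀ * A).trace = ∑ i, ∑ j, (A i j) ^ 2 := by
  simp only [Matrix.trace, Matrix.diag, Matrix.mul_apply, Matrix.transpose_apply, sq]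
  rw [Finset.sum_comm]

lemma my_frob_le {d : ℕ} (A Q Q' : Matrix (Fin d) (Fin d) ℝ)
    (hQ : Qᵀ = Q) (hQ2 : Q * Q = Q) (hQ' : Q'ᵀ = Q') (hQ'2 : Q' * Q' = Q') :
    ∑ i, ∑ j, ((A - Q * A * Q') i j) ^ 2 ≤ ∑ i, ∑ j, (A i j) ^ 2 := by
  set C := Q * A * Q' with hC
  have hCT : Cᵀ = Q' * Aᵀ * Q := by
    rw [hC, Matrix.transpose_mul, Matrix.transpose_mul, hQ, hQ', Matrix.mul_assoc]
  have key : (Cᵀ * C).trace = (Cᵀ * A).trace := by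
    have e1 : Cᵀ * C = Q' * Aᵀ * Q * A * Q' := by
      rw [hCT, hC]
      calc Q' * Aᵀ * Q * (Q * A * Q') = Q' * Aᵀ * (Q * Q) * A * Q' := by
            simp only [Matrix.mul_assoc]
        _ = Q' * Aᵀ * Q * A * Q' := by rw [hQ2]
    have e2 : (Q' * Aᵀ * Q * A * Q').trace = (Q' * (Q' * Aᵀ * Q * A)).trace :=
      Matrix.trace_mul_comm _ _
    have e3 : Q' * (Q' * Aᵀ * Q * A) = Q' * Aᵀ * Q * A := by
      calc Q' * (Q' * Aᵀ * Q * A) = (Q' * Q') * Aᵀ * Q * A := by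
            simp only [Matrix.mul_assoc]
        _ = Q' * Aᵀ * Q * A := by rw [hQ'2]
    rw [e1, e2, e3, hCT]
  have hAC : (Aᵀ * C).trace = (Cᵀ * A).trace := by
    rw [← Matrix.trace_transpose (Aᵀ * C), Matrix.transpose_mul, Matrix.transpose_transpose]
  have hCpos : 0 ≤ (Cᵀ * C).trace := by
    rw [my_trace_frob]
    positivity
  have expand : ((A - C)ᵀ * (A - C)).trace
      = (Aᵀ * A).trace - (Aᵀ * C).trace - (Cᵀ * A).trace + (Cᵀ * C).trace := by
    rw [Matrix.transpose_sub, Matrix.sub_mul, Matrix.mul_sub, Matrix.mul_sub]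
    rw [Matrix.trace_sub, Matrix.trace_sub, Matrix.trace_sub]
    ring
  rw [← my_trace_frob, ← my_trace_frob]
  rw [expand]
  linarith [key, hAC, hCpos]

lemma my_trace_eq_sum_eig {d : ℕ} (B : Matrix (Fin d) (Fin d) ℝ) :
    (Bᵀ * B).trace = ∑ i, (Matrix.isHermitian_conjTranspose_mul_self B).eigenvalues i := by
  set H := Matrix.isHermitian_conjTranspose_mul_self B
  have hct : Bᵀ * B = Bᴴ * B := by rw [Matrix.conjTranspose_eq_transpose_of_trivial]
  rw [hct]
  conv_lhs => rw [H.spectral_theorem, Unitary.conjStarAlgAut_apply]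
  rw [Matrix.trace_mul_comm, ← Matrix.mul_assoc]
  rw [Unitary.coe_star_mul_self H.eigenvectorUnitary, Matrix.one_mul]
  simp [Matrix.trace_diagonal, RCLike.ofReal_real_eq_id]

lemma my_nuclear_le_sqrt_rank {d : ℕ} (B : Matrix (Fin d) (Fin d) ℝ) :
    nuclearNorm B ≤ Real.sqrt B.rank * frobeniusNorm B := by
  classical
  set H := Matrix.isHermitian_conjTranspose_mul_self B with hH
  set lam := H.eigenvalues with hlam
  have hnn : ∀ i, 0 ≤ lam i := fun i =>
    Matrix.eigenvalues_conjTranspose_mul_self_nonneg B i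
  set s : Finset (Fin d) := Finset.univ.filter (fun i => lam i ≠ 0) with hs
  have h1 : nuclearNorm B = ∑ i ∈ s, Real.sqrt (lam i) := by
    rw [nuclearNorm, hs]
    rw [Finset.sum_filter_of_ne]
    · rfl
    · intro i _ h hl
      exact h (by rw [hl, Real.sqrt_zero])
  have h2 : ∑ i ∈ s, Real.sqrt (lam i) ≤
      Real.sqrt (∑ _i ∈ s, (1:ℝ)) * Real.sqrt (∑ i ∈ s, lam i) := by
    have := Real.sum_sqrt_mul_sqrt_le s (f := fun _ => (1:ℝ)) (g := lam)
      (fun _ => zero_le_one) hnn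
    simpa using this
  have hcard : (∑ _i ∈ s, (1:ℝ)) = (B.rank : ℝ) := by
    rw [Finset.sum_const, nsmul_eq_mul, mul_one]
    congr 1
    rw [← Matrix.rank_transpose_mul_self B,
      show Bᵀ * B = Bᴴ * B from by rw [Matrix.conjTranspose_eq_transpose_of_trivial],
      H.rank_eq_card_non_zero_eigs, Fintype.card_subtype]
  have h3 : ∑ i ∈ s, lam i ≤ ∑ i, lam i :=
    Finset.sum_le_sum_of_subset_of_nonneg (Finset.filter_subset _ _)
      (fun i _ _ => hnn i)
  have h4 : Real.sqrt (∑ i, lam i) = frobeniusNorm B := by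
    rw [frobeniusNorm, ← my_trace_frob, my_trace_eq_sum_eig]
  calc nuclearNorm B = ∑ i ∈ s, Real.sqrt (lam i) := h1
    _ ≤ Real.sqrt (∑ _i ∈ s, (1:ℝ)) * Real.sqrt (∑ i ∈ s, lam i) := h2
    _ ≤ Real.sqrt (B.rank) * Real.sqrt (∑ i, lam i) := by
        rw [hcard]
        exact mul_le_mul_of_nonneg_left (Real.sqrt_le_sqrt h3) (Real.sqrt_nonneg _)
    _ = Real.sqrt B.rank * frobeniusNorm B := by rw [h4]

/-- Let `M = ∑_{j<r} σ_j u_j v_jᵀ` be a singular value decomposition with orthonormal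
families `u`, `v`, let `P₁, P₂` be the orthogonal projections onto `span(u)` and
`span(v)`, and define `π_M(A) = A − (1−P₁) A (1−P₂)`.  Then
(a) `π_M(A) = (1−P₁) A P₂ + P₁ A`, (b) `rank(π_M(A)) ≤ 2r`, and
(c) `‖π_M(A)‖₁ ≤ √(2r) ‖A‖₂`. -/
theorem pi_M_properties {d r : ℕ}
    (σ : Fin r → ℝ) (u v : Fin r → Fin d → ℝ)
    (hu : ∀ i j, ∑ a, u i a * u j a = if i = j then (1 : ℝ) else 0)
    (hv : ∀ i j, ∑ a, v i a * v j a = if i = j then (1 : ℝ) else 0)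
    (M : Matrix (Fin d) (Fin d) ℝ)
    (hM : M = ∑ j, σ j • Matrix.vecMulVec (u j) (v j))
    (P₁ P₂ : Matrix (Fin d) (Fin d) ℝ)
    (hP₁ : P₁ = ∑ j, Matrix.vecMulVec (u j) (u j))
    (hP₂ : P₂ = ∑ j, Matrix.vecMulVec (v j) (v j))
    (A : Matrix (Fin d) (Fin d) ℝ) :
    A - (1 - P₁) * A * (1 - P₂) = (1 - P₁) * A * P₂ + P₁ * A ∧
    (A - (1 - P₁) * A * (1 - P₂)).rank ≤ 2 * r ∧
    nuclearNorm (A - (1 - P₁) * A * (1 - P₂)) ≤ Real.sqrt (2 * r) * frobeniusNorm A := by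
  have ha : A - (1 - P₁) * A * (1 - P₂) = (1 - P₁) * A * P₂ + P₁ * A := by noncomm_ring
  have hrankP₁ : P₁.rank ≤ r := hP₁ ▸ my_rank_sum_le u
  have hrankP₂ : P₂.rank ≤ r := hP₂ ▸ my_rank_sum_le v
  have hb : (A - (1 - P₁) * A * (1 - P₂)).rank ≤ 2 * r := by
    rw [ha]
    calc ((1 - P₁) * A * P₂ + P₁ * A).rank
        ≤ ((1 - P₁) * A * P₂).rank + (P₁ * A).rank := my_rank_add_le _ _
      _ ≤ P₂.rank + P₁.rank :=
          add_le_add (Matrix.rank_mul_le_right _ _) (Matrix.rank_mul_le_left _ _)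
      _ ≤ 2 * r := by omega
  refine ⟨ha, hb, ?_⟩
  -- projections
  have hQsymm : (1 - P₁)ᵀ = 1 - P₁ := by
    rw [Matrix.transpose_sub, Matrix.transpose_one, hP₁, my_proj_symm]
  have hQ'symm : (1 - P₂)ᵀ = 1 - P₂ := by
    rw [Matrix.transpose_sub, Matrix.transpose_one, hP₂, my_proj_symm]
  have hQidem : (1 - P₁) * (1 - P₁) = 1 - P₁ := by
    have := hP₁ ▸ my_proj_idem u hu
    noncomm_ring [this]
  have hQ'idem : (1 - P₂) * (1 - P₂) = 1 - P₂ := by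
    have := hP₂ ▸ my_proj_idem v hv
    noncomm_ring [this]
  have hfrob : ∑ i, ∑ j, ((A - (1 - P₁) * A * (1 - P₂)) i j) ^ 2 ≤ ∑ i, ∑ j, (A i j) ^ 2 :=
    my_frob_le A (1 - P₁) (1 - P₂) hQsymm hQidem hQ'symm hQ'idem
  set B := A - (1 - P₁) * A * (1 - P₂) with hB
  have hfle : frobeniusNorm B ≤ frobeniusNorm A := Real.sqrt_le_sqrt hfrob
  have hsq : Real.sqrt (B.rank : ℝ) ≤ Real.sqrt (2 * r : ℝ) := by
    apply Real.sqrt_le_sqrt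
    exact_mod_cast hb
  calc nuclearNorm B ≤ Real.sqrt B.rank * frobeniusNorm B := my_nuclear_le_sqrt_rank B
    _ ≤ Real.sqrt (2 * r) * frobeniusNorm A := by
        apply mul_le_mul hsq hfle (Real.sqrt_nonneg _) (Real.sqrt_nonneg _)
end
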